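/- Let ρ: ℝ → ℝ be C² and convex with bounded second derivative, and fix z ∈ ℝ. Then λ ↦ prox_{λρ}(z) is differentiable on (0, ∞) with derivative d/dλ prox_{λρ}(z) = − ρ'(prox_{λρ}(z)) / (1 + λ ρ''(prox_{λρ}(z))). -/

import Mathlib

open Real Set

private lemma deriv_nonneg_of_monotone {g : ℝ → ℝ} (hg : Monotone g) {g' x : ℝ}
    (h : HasDerivAt g g' x) : 0 ≤ g' := by
  have h1 : Filter.Tendsto (slope g x) (nhdsWithin x (Ioi x)) (nhds g') :=
    (hasDerivAt_iff_tendsto_slope.mp h).mono_left (nhdsWithin_mono _ (fun y hy => ne_of_gt hy))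
  refine ge_of_tendsto h1 ?_
  filter_upwards [self_mem_nhdsWithin] with y hy
  have hxy : x < y := hy
  rw [slope_def_field]
  exact div_nonneg (by linarith [hg hxy.le]) (by linarith)

/-- for `C²` convex `ρ` with bounded second derivative and fixed `z`, the map
`λ ↦ prox_{λρ}(z)` (here `P`, characterized as the minimizer of `x ↦ λρ(x)+(x−z)²/2`)
is differentiable on `(0, ∞)` with derivative `−ρ'(P λ)/(1 + λρ''(P λ))`. -/
theorem prox_hasDerivAt_in_lambda
    (ρ : ℝ → ℝ) (hρ_conv : ConvexOn ℝ Set.univ ρ) (hρ_smooth : ContDiff ℝ 2 ρ)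
    (C : ℝ) (hρ''_bdd : ∀ x, |iteratedDeriv 2 ρ x| ≤ C)
    (z : ℝ) (P : ℝ → ℝ)
    (hP : ∀ lam : ℝ, 0 < lam →
      IsMinOn (fun x => lam * ρ x + (x - z) ^ 2 / 2) Set.univ (P lam)) :
    ∀ lam : ℝ, 0 < lam →
      HasDerivAt P (-(deriv ρ (P lam)) / (1 + lam * iteratedDeriv 2 ρ (P lam))) lam := by
  -- basic smoothness facts
  have h2 : ContDiff ℝ ((1:ℕ) + 1) ρ := by exact_mod_cast hρ_smooth
  rw [contDiff_succ_iff_deriv] at h2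
  have hd1 : Differentiable ℝ ρ := h2.1
  have hc1 : ContDiff ℝ 1 (deriv ρ) := by exact_mod_cast h2.2.2
  have hd2 : Differentiable ℝ (deriv ρ) := hc1.differentiable one_ne_zero
  have hIter : ∀ x, iteratedDeriv 2 ρ x = deriv (deriv ρ) x := by
    intro x
    rw [show (2:ℕ) = 1 + 1 from rfl, iteratedDeriv_succ, iteratedDeriv_one]
  -- monotonicity of deriv ρ
  have hmono : Monotone (deriv ρ) := by
    have := hρ_conv.monotoneOn_deriv (fun x _ => hd1.differentiableAt)
    exact fun a b hab => this (mem_univ a) (mem_univ b) hab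
  -- second derivative nonneg
  have hρ''_nonneg : ∀ x, 0 ≤ iteratedDeriv 2 ρ x := by
    intro x
    rw [hIter x]
    exact deriv_nonneg_of_monotone hmono (hd2.differentiableAt).hasDerivAt
  -- stationarity: P lam + lam * ρ'(P lam) = z
  have key : ∀ lam : ℝ, 0 < lam → P lam + lam * deriv ρ (P lam) = z := by
    intro lam hlam
    have hmin : IsLocalMin (fun x => lam * ρ x + (x - z) ^ 2 / 2) (P lam) :=
      (hP lam hlam).isLocalMin (by simp [Filter.univ_mem])
    have hder : HasDerivAt (fun x => lam * ρ x + (x - z) ^ 2 / 2)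
        (lam * deriv ρ (P lam) + (P lam - z)) (P lam) := by
      have h1 : HasDerivAt (fun x => lam * ρ x) (lam * deriv ρ (P lam)) (P lam) :=
        (hd1.differentiableAt.hasDerivAt).const_mul lam
      have h2' : HasDerivAt (fun x : ℝ => (x - z) ^ 2 / 2) (P lam - z) (P lam) := by
        have : HasDerivAt (fun x : ℝ => (x - z) ^ 2) (2 * (P lam - z) ^ 1 * 1) (P lam) :=
          ((hasDerivAt_id (P lam)).sub_const z).pow 2
        simpa using this.div_const 2
      exact h1.add h2'
    have := hmin.hasDerivAt_eq_zero hder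
    linarith
  -- uniqueness of the stationary point
  have huniq : ∀ lam : ℝ, 0 < lam → ∀ x : ℝ, x + lam * deriv ρ x = z → x = P lam := by
    intro lam hlam x hx
    have hSM : StrictMono (fun x => x + lam * deriv ρ x) :=
      strictMono_id.add_monotone (fun a b hab => by
        have := hmono hab
        nlinarith)
    exact hSM.injective (by rw [hx, key lam hlam])
  intro lam₀ hlam₀
  set p₀ := P lam₀ with hp₀
  by_cases h0 : deriv ρ p₀ = 0
  · -- trivial case: P is locally constant
    have hpz : p₀ = z := by have := key lam₀ hlam₀; rw [h0] at this; linarith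
    have hconst : ∀ lam : ℝ, 0 < lam → P lam = p₀ := by
      intro lam hlam
      exact (huniq lam hlam p₀ (by rw [h0]; simp [hpz])).symm
    have hev : P =ᶠ[nhds lam₀] fun _ => p₀ := by
      filter_upwards [Ioi_mem_nhds hlam₀] with lam hlam
      exact hconst lam hlam
    have : HasDerivAt P 0 lam₀ := (hasDerivAt_const lam₀ p₀).congr_of_eventuallyEq hev
    rw [h0]
    simpa using this
  · -- main case: inverse function theorem via Λ(x) = (z - x)/ρ'(x)
    have hlip : ∀ lam : ℝ, 0 < lam → |P lam - p₀| ≤ |lam - lam₀| * |deriv ρ p₀| := by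
      intro lam hlam
      set a := P lam - p₀ with ha
      set b := lam * (deriv ρ (P lam) - deriv ρ p₀) with hb
      have hsum : a + b = -((lam - lam₀) * deriv ρ p₀) := by
        rw [ha, hb, hp₀]
        linear_combination key lam hlam - key lam₀ hlam₀
      have hab : 0 ≤ a * b := by
        rcases le_or_gt (p₀) (P lam) with h | h
        · have := hmono h
          have hb0 : 0 ≤ b := by rw [hb]; nlinarith
          have : 0 ≤ a := by rw [ha]; linarith
          positivity
        · have := hmono h.le
          have hb0 : b ≤ 0 := by rw [hb]; nlinarith
          have ha0 : a ≤ 0 := by rw [ha]; linarith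
          nlinarith
      have habs : |a| ≤ |a + b| := by
        nlinarith [sq_abs a, sq_abs (a + b), sq_nonneg b, abs_nonneg a, abs_nonneg (a + b),
          sq_nonneg (|a + b| - |a|), sq_nonneg (|a + b| + |a|)]
      calc |a| ≤ |a + b| := habs
        _ = |lam - lam₀| * |deriv ρ p₀| := by rw [hsum, abs_neg, abs_mul]
    -- continuity of P at lam₀
    have hPcont : ContinuousAt P lam₀ := by
      rw [Metric.continuousAt_iff]
      intro ε hε
      set K := |deriv ρ p₀|
      have hK : 0 < K := abs_pos.mpr h0
      refine ⟨min (ε / K) lam₀, by positivity, fun {x} hx => ?_⟩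
      have hx1 : |x - lam₀| < ε / K := lt_of_lt_of_le (by simpa [Real.dist_eq] using hx) (min_le_left _ _)
      have hx2 : |x - lam₀| < lam₀ := lt_of_lt_of_le (by simpa [Real.dist_eq] using hx) (min_le_right _ _)
      have hxpos : 0 < x := by
        rcases abs_lt.mp hx2 with ⟨h1, _⟩; linarith
      have := hlip x hxpos
      rw [Real.dist_eq, ← hp₀]
      calc |P x - p₀| ≤ |x - lam₀| * K := this
        _ < (ε / K) * K := by exact mul_lt_mul_of_pos_right hx1 hK
        _ = ε := by field_simp
    -- eventually ρ'(P lam) ≠ 0 and the left-inverse identity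
    have hcontρ' : ContinuousAt (fun lam => deriv ρ (P lam)) lam₀ :=
      (hd2.continuous.continuousAt).comp hPcont
    have hne : ∀ᶠ lam in nhds lam₀, deriv ρ (P lam) ≠ 0 :=
      hcontρ'.eventually_ne h0
    set Λ : ℝ → ℝ := fun x => (z - x) / deriv ρ x with hΛdef
    have hfg : ∀ᶠ lam in nhds lam₀, Λ (P lam) = lam := by
      filter_upwards [hne, Ioi_mem_nhds hlam₀] with lam h1 h2
      have hk := key lam h2
      show (z - P lam) / deriv ρ (P lam) = lam
      have hzp' : z - P lam = lam * deriv ρ (P lam) := by linarith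
      rw [hzp']
      field_simp
    -- derivative of Λ at p₀
    set d := deriv ρ p₀ with hd
    set s := iteratedDeriv 2 ρ p₀ with hs
    have hzp : z - p₀ = lam₀ * d := by
      have := key lam₀ hlam₀; rw [hd, hp₀]; linarith
    have hΛ' : HasDerivAt Λ ((-1 * d - (z - p₀) * s) / d ^ 2) p₀ := by
      have hnum : HasDerivAt (fun x => z - x) (-1) p₀ := by
        have := (hasDerivAt_const p₀ z).sub (hasDerivAt_id p₀); rwa [zero_sub] at this
      have hden : HasDerivAt (deriv ρ) s p₀ := by
        rw [hs, hIter]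
        exact (hd2.differentiableAt).hasDerivAt
      exact hnum.div hden h0
    have hspos : (0:ℝ) < 1 + lam₀ * s := by
      have := hρ''_nonneg p₀
      rw [← hs] at this
      nlinarith
    have hΛ'val : (-1 * d - (z - p₀) * s) / d ^ 2 = -(1 + lam₀ * s) / d := by
      rw [hzp]; field_simp; ring
    have hΛ'ne : (-1 * d - (z - p₀) * s) / d ^ 2 ≠ 0 := by
      rw [hΛ'val]
      exact div_ne_zero (neg_ne_zero.mpr (ne_of_gt hspos)) h0
    have hmain : HasDerivAt P ((-1 * d - (z - p₀) * s) / d ^ 2)⁻¹ lam₀ :=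
      HasDerivAt.of_local_left_inverse hPcont hΛ' hΛ'ne hfg
    have hval : ((-1 * d - (z - p₀) * s) / d ^ 2)⁻¹ = -d / (1 + lam₀ * s) := by
      rw [hΛ'val, inv_div, div_neg, neg_div]
    rw [hval] at hmain
    exact hmain
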